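/- (Existence of an optimal hedge.) Let ρ be a convex risk measure on B compatible with P and continuous from below, and let V be a nonempty convex subset of B that is bounded in L^∞: there exists a constant C with |ξ| ≤ C P-a.s. for every ξ ∈ V. Then for every X ∈ B the hedging infimum ρ^m(X) = inf_{ξ∈V} ρ(X − ξ) is finite and attained in the closure of V with respect to almost-sure convergence: there exist ξ* ∈ B with |ξ*| ≤ C P-a.s. and a sequence (ξ_n) of elements of V converging to ξ* P-almost surely, such that ρ(X − ξ*) = inf_{ξ∈V} ρ(X − ξ). -/

import Mathlib

open MeasureTheory Filter

/-- Membership in `B`, the set of bounded measurable real-valued functions. -/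
def InB {Ω : Type*} [MeasurableSpace Ω] (f : Ω → ℝ) : Prop :=
  Measurable f ∧ ∃ C : ℝ, ∀ ω, |f ω| ≤ C

/-- Existence of an optimal hedge: for a convex risk measure `ρ` on bounded measurable
functions, compatible with `P` and continuous from below, and a nonempty convex set `V`
of hedging instruments uniformly bounded by `C`, the hedging infimum
`inf_{ξ ∈ V} ρ(X - ξ)` is finite and attained at some `ξ*` in the closure of `V` with
respect to `P`-almost-sure convergence. -/
lemma tendsto_ciSup_tail {u : ℕ → ℝ} {l K : ℝ} (hb : ∀ n, |u n| ≤ K)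
    (h : Tendsto u atTop (nhds l)) :
    Tendsto (fun j => ⨆ k, u (j + k)) atTop (nhds l) := by
  rw [Metric.tendsto_atTop] at h ⊢
  intro ε hε
  obtain ⟨N, hN⟩ := h (ε / 2) (half_pos hε)
  refine ⟨N, fun j hj => ?_⟩
  have hbdd : BddAbove (Set.range fun k => u (j + k)) := by
    refine ⟨K, ?_⟩; rintro x ⟨k, rfl⟩; exact (abs_le.1 (hb _)).2
  have h1 : (⨆ k, u (j + k)) ≤ l + ε / 2 := by
    refine ciSup_le fun k => ?_
    have := hN (j + k) (le_trans hj (Nat.le_add_right _ _))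
    rw [Real.dist_eq] at this
    linarith [(abs_lt.1 this).2]
  have h2 : l - ε / 2 ≤ ⨆ k, u (j + k) := by
    have h3 := hN j hj
    rw [Real.dist_eq] at h3
    have h4 : u (j + 0) ≤ ⨆ k, u (j + k) := le_ciSup hbdd 0
    simp only [Nat.add_zero] at h4
    linarith [(abs_lt.1 h3).1]
  rw [Real.dist_eq, abs_lt]
  constructor <;> linarith

lemma tendsto_ciInf_tail {u : ℕ → ℝ} {l K : ℝ} (hb : ∀ n, |u n| ≤ K)
    (h : Tendsto u atTop (nhds l)) :
    Tendsto (fun j => ⨅ k, u (j + k)) atTop (nhds l) := by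
  rw [Metric.tendsto_atTop] at h ⊢
  intro ε hε
  obtain ⟨N, hN⟩ := h (ε / 2) (half_pos hε)
  refine ⟨N, fun j hj => ?_⟩
  have hbdd : BddBelow (Set.range fun k => u (j + k)) := by
    refine ⟨-K, ?_⟩; rintro x ⟨k, rfl⟩; exact (abs_le.1 (hb _)).1
  have h1 : l - ε / 2 ≤ ⨅ k, u (j + k) := by
    refine le_ciInf fun k => ?_
    have := hN (j + k) (le_trans hj (Nat.le_add_right _ _))
    rw [Real.dist_eq] at this
    linarith [(abs_lt.1 this).1]
  have h2 : (⨅ k, u (j + k)) ≤ l + ε / 2 := by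
    have h3 := hN j hj
    rw [Real.dist_eq] at h3
    have h4 : (⨅ k, u (j + k)) ≤ u (j + 0) := ciInf_le hbdd 0
    simp only [Nat.add_zero] at h4
    linarith [(abs_lt.1 h3).2]
  rw [Real.dist_eq, abs_lt]
  constructor <;> linarith

lemma integrable_of_inB {Ω : Type*} [MeasurableSpace Ω] {P : Measure Ω} [IsProbabilityMeasure P]
    {f : Ω → ℝ} {K : ℝ} (hm : Measurable f) (hb : ∀ ω, |f ω| ≤ K) : Integrable f P :=
  ⟨hm.aestronglyMeasurable, HasFiniteIntegral.of_bounded (C := K)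
    (ae_of_all _ fun ω => by simpa [Real.norm_eq_abs] using hb ω)⟩

theorem stmt18 {Ω : Type*} [MeasurableSpace Ω] (P : Measure Ω) [IsProbabilityMeasure P]
    (ρ : (Ω → ℝ) → ℝ)
    (hconv : ∀ Φ Ψ : Ω → ℝ, InB Φ → InB Ψ → ∀ l : ℝ, 0 ≤ l → l ≤ 1 →
        ρ (l • Φ + (1 - l) • Ψ) ≤ l * ρ Φ + (1 - l) * ρ Ψ)
    (hmono : ∀ Φ Ψ : Ω → ℝ, InB Φ → InB Ψ → (∀ᵐ ω ∂P, Φ ω ≤ Ψ ω) → ρ Ψ ≤ ρ Φ)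
    (htrans : ∀ Φ : Ω → ℝ, InB Φ → ∀ m : ℝ, ρ (Φ + fun _ => m) = ρ Φ - m)
    (hae : ∀ Φ Ψ : Ω → ℝ, InB Φ → InB Ψ → Φ =ᵐ[P] Ψ → ρ Φ = ρ Ψ)
    (hcb : ∀ (Ψn : ℕ → Ω → ℝ) (Ψ : Ω → ℝ), (∀ n, InB (Ψn n)) → InB Ψ →
        (∃ K : ℝ, ∀ n, ∀ᵐ ω ∂P, |Ψn n ω| ≤ K) →
        (∀ᵐ ω ∂P, ∀ n, Ψn n ω ≤ Ψn (n + 1) ω) →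
        (∀ᵐ ω ∂P, Tendsto (fun n => Ψn n ω) atTop (nhds (Ψ ω))) →
        Tendsto (fun n => ρ (Ψn n)) atTop (nhds (ρ Ψ)))
    (V : Set (Ω → ℝ)) (hVne : V.Nonempty) (hVconv : Convex ℝ V)
    (hVB : ∀ ξ ∈ V, InB ξ)
    (C : ℝ) (hVbdd : ∀ ξ ∈ V, ∀ᵐ ω ∂P, |ξ ω| ≤ C)
    (X : Ω → ℝ) (hX : InB X) :
    BddBelow (Set.range fun ξ : V => ρ (X - (ξ : Ω → ℝ))) ∧
    ∃ ξs : Ω → ℝ, InB ξs ∧ (∀ᵐ ω ∂P, |ξs ω| ≤ C) ∧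
      (∃ ξn : ℕ → Ω → ℝ, (∀ n, ξn n ∈ V) ∧
        ∀ᵐ ω ∂P, Tendsto (fun n => ξn n ω) atTop (nhds (ξs ω))) ∧
      ρ (X - ξs) = ⨅ ξ : V, ρ (X - (ξ : Ω → ℝ)) := by
  classical
  obtain ⟨hXm, CX, hXb⟩ := hX
  have hX : InB X := ⟨hXm, CX, hXb⟩
  obtain ⟨ξ₀, hξ₀⟩ := hVne
  haveI : Nonempty V := ⟨⟨ξ₀, hξ₀⟩⟩
  -- C is nonnegative
  have hC0 : 0 ≤ C := by
    obtain ⟨ω, hω⟩ := (hVbdd ξ₀ hξ₀).exists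
    exact le_trans (abs_nonneg _) hω
  -- InB closure facts
  have hBsub : ∀ f g : Ω → ℝ, InB f → InB g → InB (f - g) := by
    rintro f g ⟨hf, Cf, hCf⟩ ⟨hg, Cg, hCg⟩
    exact ⟨hf.sub hg, Cf + Cg, fun ω => by
      simpa using (abs_sub (f ω) (g ω)).trans (add_le_add (hCf ω) (hCg ω))⟩
  have hBcomb : ∀ (f g : Ω → ℝ) (a : ℝ), InB f → InB g → InB (a • f + (1 - a) • g) := by
    rintro f g a ⟨hf, Cf, hCf⟩ ⟨hg, Cg, hCg⟩
    refine ⟨(hf.const_smul a).add (hg.const_smul (1 - a)), |a| * Cf + |1 - a| * Cg, fun ω => ?_⟩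
    have h1 : |a * f ω + (1 - a) * g ω| ≤ |a| * |f ω| + |1 - a| * |g ω| := by
      calc |a * f ω + (1 - a) * g ω| ≤ |a * f ω| + |(1 - a) * g ω| := abs_add_le _ _
        _ = |a| * |f ω| + |1 - a| * |g ω| := by rw [abs_mul, abs_mul]
    have h2 : |a| * |f ω| ≤ |a| * Cf := mul_le_mul_of_nonneg_left (hCf ω) (abs_nonneg _)
    have h3 : |1 - a| * |g ω| ≤ |1 - a| * Cg := mul_le_mul_of_nonneg_left (hCg ω) (abs_nonneg _)
    simp only [Pi.add_apply, Pi.smul_apply, smul_eq_mul]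
    linarith
  -- key rearrangement : X - (a f + (1-a) g) = a (X - f) + (1-a) (X - g)
  have hrearr : ∀ (f g : Ω → ℝ) (a : ℝ),
      X - (a • f + (1 - a) • g) = a • (X - f) + (1 - a) • (X - g) := by
    intro f g a
    funext ω
    simp only [Pi.sub_apply, Pi.add_apply, Pi.smul_apply, smul_eq_mul]
    ring
  -- lower bound for the infimum
  have hXC : InB (X + fun _ => C) := ⟨hXm.add measurable_const, CX + C, fun ω => by
    simpa [abs_of_nonneg hC0] using (abs_add_le (X ω) C).trans (add_le_add (hXb ω) (le_of_eq (abs_of_nonneg hC0)))⟩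
  have hlb : ∀ ξ ∈ V, ρ X - C ≤ ρ (X - ξ) := by
    intro ξ hξ
    have h1 : ρ (X + fun _ => C) ≤ ρ (X - ξ) := by
      refine hmono (X - ξ) (X + fun _ => C) (hBsub X ξ hX (hVB ξ hξ)) hXC ?_
      refine (hVbdd ξ hξ).mono fun ω hω => ?_
      simp only [Pi.sub_apply, Pi.add_apply]
      linarith [(abs_le.1 hω).1]
    rwa [htrans X hX C] at h1
  have hbddBelow : BddBelow (Set.range fun ξ : V => ρ (X - (ξ : Ω → ℝ))) := by
    refine ⟨ρ X - C, ?_⟩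
    rintro y ⟨ξ, rfl⟩
    exact hlb ξ ξ.2
  refine ⟨hbddBelow, ?_⟩
  set m : ℝ := ⨅ ξ : V, ρ (X - (ξ : Ω → ℝ)) with hm
  have hmle : ∀ ξ ∈ V, m ≤ ρ (X - ξ) := fun ξ hξ => ciInf_le hbddBelow ⟨ξ, hξ⟩
  -- minimizing sequence
  have hmin : ∀ n : ℕ, ∃ ξ : V, ρ (X - (ξ : Ω → ℝ)) < m + 1 / (n + 1) := by
    intro n
    have : m < m + 1 / (n + 1) := by
      have : (0:ℝ) < 1 / (n + 1) := by positivity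
      linarith
    exact exists_lt_of_ciInf_lt this
  choose ξseq hξseq using hmin
  -- the tail convex hulls
  set S : ℕ → Set (Ω → ℝ) := fun n => convexHull ℝ ((fun k => (ξseq k : Ω → ℝ)) '' Set.Ici n)
    with hS
  have hSanti : ∀ n n', n ≤ n' → S n' ⊆ S n := by
    intro n n' h
    exact convexHull_mono (Set.image_mono (Set.Ici_subset_Ici.2 h))
  have hSconv : ∀ n, Convex ℝ (S n) := fun n => convex_convexHull _ _
  have hSne : ∀ n, (ξseq n : Ω → ℝ) ∈ S n :=
    fun n => subset_convexHull _ _ ⟨n, Set.self_mem_Ici, rfl⟩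
  have hSsub : ∀ n, S n ⊆ {g | g ∈ V ∧ InB g ∧ (∀ᵐ ω ∂P, |g ω| ≤ C) ∧
      ρ (X - g) ≤ m + 1 / (n + 1)} := by
    intro n
    apply convexHull_min
    · rintro g ⟨k, hk, rfl⟩
      refine ⟨(ξseq k).2, hVB _ (ξseq k).2, hVbdd _ (ξseq k).2, le_of_lt (lt_of_lt_of_le
        (hξseq k) ?_)⟩
      have : (1:ℝ) / (k + 1) ≤ 1 / (n + 1) := by
        apply one_div_le_one_div_of_le
        · positivity
        · have h2 := (Set.mem_Ici.1 hk)
          have : (n : ℝ) ≤ (k : ℝ) := Nat.cast_le.2 h2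
          linarith
      linarith
    · rintro f ⟨hfV, hfB, hfb, hfρ⟩ g ⟨hgV, hgB, hgb, hgρ⟩ a b ha hb hab
      have hb' : b = 1 - a := by linarith
      subst hb'
      refine ⟨hVconv hfV hgV ha hb hab, hBcomb f g a hfB hgB, ?_, ?_⟩
      · filter_upwards [hfb, hgb] with ω h1 h2
        simp only [Pi.add_apply, Pi.smul_apply, smul_eq_mul]
        calc |a * f ω + (1 - a) * g ω| ≤ |a * f ω| + |(1 - a) * g ω| := abs_add_le _ _
          _ = a * |f ω| + (1 - a) * |g ω| := by
              rw [abs_mul, abs_mul, abs_of_nonneg ha, abs_of_nonneg (by linarith : (0:ℝ) ≤ 1 - a)]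
          _ ≤ a * C + (1 - a) * C := add_le_add
              (mul_le_mul_of_nonneg_left h1 ha)
              (mul_le_mul_of_nonneg_left h2 (by linarith))
          _ = C := by ring
      · rw [hrearr]
        calc ρ (a • (X - f) + (1 - a) • (X - g)) ≤ a * ρ (X - f) + (1 - a) * ρ (X - g) :=
              hconv _ _ (hBsub X f hX hfB) (hBsub X g hX hgB) a ha (by linarith)
          _ ≤ a * (m + 1 / (n + 1)) + (1 - a) * (m + 1 / (n + 1)) := add_le_add
              (mul_le_mul_of_nonneg_left hfρ ha)
              (mul_le_mul_of_nonneg_left hgρ (by linarith))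
          _ = m + 1 / (n + 1) := by ring

  -- the L² machinery
  set N : (Ω → ℝ) → ℝ := fun g => ∫ ω, (g ω) ^ 2 ∂P with hN
  have hNint : ∀ g : Ω → ℝ, InB g → Integrable (fun ω => (g ω) ^ 2) P := by
    rintro g ⟨hg, Cg, hCg⟩
    refine integrable_of_inB (hg.pow_const 2) (K := Cg ^ 2) fun ω => ?_
    rw [abs_pow, ← sq_abs, abs_abs]
    exact pow_le_pow_left₀ (abs_nonneg _) (hCg ω) 2
  have hNnonneg : ∀ g : Ω → ℝ, 0 ≤ N g := fun g => integral_nonneg fun ω => sq_nonneg _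
  have hNbdd : ∀ g : Ω → ℝ, InB g → (∀ᵐ ω ∂P, |g ω| ≤ C) → N g ≤ C ^ 2 := by
    intro g hgB hgb
    have h1 : ∀ᵐ ω ∂P, (g ω) ^ 2 ≤ C ^ 2 := hgb.mono fun ω hω => by
      rw [← sq_abs]; exact pow_le_pow_left₀ (abs_nonneg _) hω 2
    calc N g ≤ ∫ _ω, C ^ 2 ∂P := integral_mono_ae (hNint g hgB) (integrable_const _) h1
      _ = C ^ 2 := by simp
  set c : ℕ → ℝ := fun n => sInf (N '' S n) with hc
  have hcim_ne : ∀ n, (N '' S n).Nonempty := fun n => ⟨N (ξseq n), Set.mem_image_of_mem _ (hSne n)⟩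
  have hcim_bdd : ∀ n, BddBelow (N '' S n) := by
    intro n
    exact ⟨0, by rintro y ⟨g, _, rfl⟩; exact hNnonneg g⟩
  have hcmono : Monotone c := by
    intro n n' h
    exact csInf_le_csInf (hcim_bdd n) (hcim_ne n') (Set.image_mono (hSanti n n' h))
  have hcub : ∀ n, c n ≤ C ^ 2 := by
    intro n
    refine le_trans (csInf_le (hcim_bdd n) (Set.mem_image_of_mem _ (hSne n))) ?_
    exact hNbdd _ (hVB _ (ξseq n).2) (hVbdd _ (ξseq n).2)
  set cl : ℝ := ⨆ n, c n with hcl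
  have hcbddA : BddAbove (Set.range c) := ⟨C ^ 2, by rintro y ⟨n, rfl⟩; exact hcub n⟩
  have hcle : ∀ n, c n ≤ cl := fun n => le_ciSup hcbddA n
  have hctendsto : Tendsto c atTop (nhds cl) := tendsto_atTop_ciSup hcmono hcbddA
  -- near-minimizers of the norm on S n
  have hetaex : ∀ n : ℕ, ∃ g ∈ S n, N g < c n + 1 / (n + 1) := by
    intro n
    have h1 : c n < c n + 1 / (n + 1) := by
      have : (0:ℝ) < 1 / (n + 1) := by positivity
      linarith
    obtain ⟨y, ⟨g, hg, rfl⟩, hy⟩ := exists_lt_of_csInf_lt (hcim_ne n) h1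
    exact ⟨g, hg, hy⟩
  choose η hηS hηN using hetaex
  have hηV : ∀ n, η n ∈ V := fun n => (hSsub n (hηS n)).1
  have hηB : ∀ n, InB (η n) := fun n => (hSsub n (hηS n)).2.1
  have hηb : ∀ n, ∀ᵐ ω ∂P, |η n ω| ≤ C := fun n => (hSsub n (hηS n)).2.2.1
  have hηρ : ∀ n, ρ (X - η n) ≤ m + 1 / (n + 1) := fun n => (hSsub n (hηS n)).2.2.2
  -- parallelogram estimate
  have hpar : ∀ n n', n ≤ n' → N (η n - η n') ≤ 2 / (n + 1) + 2 / (n' + 1) + 2 * (cl - c n) := by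
    intro n n' hnn
    set md : Ω → ℝ := (2⁻¹ : ℝ) • η n + (1 - 2⁻¹ : ℝ) • η n' with hmd
    have hmdS : md ∈ S n := by
      have h2 : η n' ∈ S n := hSanti n n' hnn (hηS n')
      have := (hSconv n) (hηS n) h2 (by norm_num : (0:ℝ) ≤ 2⁻¹)
        (by norm_num : (0:ℝ) ≤ 1 - 2⁻¹) (by norm_num)
      simpa [hmd] using this
    have hmdB : InB md := hBcomb _ _ _ (hηB n) (hηB n')
    have hcnmd : c n ≤ N md := csInf_le (hcim_bdd n) (Set.mem_image_of_mem _ hmdS)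
    -- the parallelogram identity
    have hkey : N (η n - η n') = 2 * N (η n) + 2 * N (η n') - 4 * N md := by
      have hint1 := hNint _ (hηB n)
      have hint2 := hNint _ (hηB n')
      have hint3 := hNint _ hmdB
      have heq : (fun ω => (η n ω - η n' ω) ^ 2) =
          (fun ω => 2 * (η n ω) ^ 2 + 2 * (η n' ω) ^ 2 - 4 * (md ω) ^ 2) := by
        funext ω
        simp only [hmd, Pi.add_apply, Pi.smul_apply, smul_eq_mul]
        ring
      have : N (η n - η n') = ∫ ω, (2 * (η n ω) ^ 2 + 2 * (η n' ω) ^ 2 - 4 * (md ω) ^ 2) ∂P := by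
        rw [hN]
        simp only [Pi.sub_apply]
        rw [← heq]
      rw [this]
      have i1 : Integrable (fun ω => 2 * (η n ω) ^ 2 + 2 * (η n' ω) ^ 2) P :=
        (hint1.const_mul 2).add (hint2.const_mul 2)
      rw [integral_sub i1 (hint3.const_mul 4),
        integral_add (hint1.const_mul 2) (hint2.const_mul 2),
        integral_const_mul, integral_const_mul, integral_const_mul]
    have h1 : N (η n) < c n + 1 / (n + 1) := hηN n
    have h2 : N (η n') < c n' + 1 / (n' + 1) := hηN n'
    have h3 : c n' ≤ cl := hcle n'
    have e1 : (2:ℝ) / (n + 1) = 2 * (1 / ((n:ℝ) + 1)) := by ring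
    have e2 : (2:ℝ) / (n' + 1) = 2 * (1 / ((n':ℝ) + 1)) := by ring
    rw [hkey, e1, e2]
    linarith
  -- indices for fast L² Cauchy subsequence
  have hMex : ∀ δ : ℝ, 0 < δ → ∃ M : ℕ, ∀ a b, M ≤ a → M ≤ b → N (η a - η b) ≤ δ := by
    intro δ hδ
    obtain ⟨M₁, hM₁⟩ := (Metric.tendsto_atTop.1 hctendsto) (δ / 8) (by linarith)
    obtain ⟨M₂, hM₂⟩ := (Metric.tendsto_atTop.1 (tendsto_one_div_add_atTop_nhds_zero_nat (𝕜 := ℝ)))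
      (δ / 8) (by linarith)
    refine ⟨max M₁ M₂, fun a b ha hb => ?_⟩
    have hNsymm : ∀ f g : Ω → ℝ, N (f - g) = N (g - f) := by
      intro f g
      have he : (fun ω => ((f - g) ω) ^ 2) = (fun ω => ((g - f) ω) ^ 2) := by
        funext ω; simp only [Pi.sub_apply]; ring
      show (∫ ω, ((f - g) ω) ^ 2 ∂P) = ∫ ω, ((g - f) ω) ^ 2 ∂P
      rw [he]
    have key : ∀ a b, max M₁ M₂ ≤ a → max M₁ M₂ ≤ b → a ≤ b → N (η a - η b) ≤ δ := by
      intro a b ha hb hab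
      have h1 := hpar a b hab
      have h2 : (1:ℝ) / (a + 1) ≤ δ / 8 := by
        have := hM₂ a (le_trans (le_max_right _ _) ha)
        rw [Real.dist_eq] at this
        have h3 : |1 / ((a:ℝ) + 1) - 0| = 1 / ((a:ℝ) + 1) := by
          rw [sub_zero, abs_of_pos (by positivity)]
        rw [h3] at this
        linarith
      have h4 : (1:ℝ) / (b + 1) ≤ δ / 8 := by
        have := hM₂ b (le_trans (le_max_right _ _) hb)
        rw [Real.dist_eq] at this
        have h3 : |1 / ((b:ℝ) + 1) - 0| = 1 / ((b:ℝ) + 1) := by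
          rw [sub_zero, abs_of_pos (by positivity)]
        rw [h3] at this
        linarith
      have h5 : cl - c a ≤ δ / 8 := by
        have := hM₁ a (le_trans (le_max_left _ _) ha)
        rw [Real.dist_eq] at this
        have h6 := hcle a
        have := (abs_lt.1 this).1
        linarith
      calc N (η a - η b) ≤ 2 / (a + 1) + 2 / (b + 1) + 2 * (cl - c a) := h1
        _ ≤ 2 * (δ / 8) + 2 * (δ / 8) + 2 * (δ / 8) := by
            have e1 : (2:ℝ) / (a + 1) = 2 * (1 / (a+1)) := by ring
            have e2 : (2:ℝ) / (b + 1) = 2 * (1 / (b+1)) := by ring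
            rw [e1, e2]
            have := hM₂ a
            nlinarith
        _ ≤ δ := by linarith
    rcases le_total a b with h | h
    · exact key a b ha hb h
    · rw [hNsymm]; exact key b a hb ha h

  -- fast Cauchy subsequence
  choose Mf hMf using fun k : ℕ => hMex ((1/8 : ℝ) ^ (k+1)) (by positivity)
  set ns : ℕ → ℕ := fun k => Nat.rec (Mf 0) (fun k ih => max (ih + 1) (Mf (k+1))) k with hns
  have hnssucc : ∀ k, ns (k+1) = max (ns k + 1) (Mf (k+1)) := fun k => rfl
  have hnslt : ∀ k, ns k < ns (k+1) := fun k =>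
    lt_of_lt_of_le (Nat.lt_succ_self _) (by rw [hnssucc]; exact le_max_left _ _)
  have hnsmono : StrictMono ns := strictMono_nat_of_lt_succ hnslt
  have hnsge : ∀ k, Mf k ≤ ns k := by
    intro k
    cases k with
    | zero => exact le_of_eq rfl
    | succ k => rw [hnssucc]; exact le_max_right _ _
  have hnsk : ∀ k, k ≤ ns k := fun k => hnsmono.le_apply
  have hNdelta : ∀ k, N (η (ns (k+1)) - η (ns k)) ≤ (1/8 : ℝ) ^ (k+1) :=
    fun k => hMf k _ _ (le_trans (hnsge k) (le_of_lt (hnslt k))) (hnsge k)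
  -- truncation operator
  set tr : (Ω → ℝ) → Ω → ℝ := fun g ω => max (-C) (min C (g ω)) with htr
  have htrm : ∀ g : Ω → ℝ, Measurable g → Measurable (tr g) := fun g hg =>
    measurable_const.max (measurable_const.min hg)
  have htrb : ∀ (g : Ω → ℝ) (ω : Ω), |tr g ω| ≤ C := by
    intro g ω
    rw [abs_le]
    refine ⟨le_max_left _ _, max_le (by linarith) (min_le_left _ _)⟩
  have htrae : ∀ g : Ω → ℝ, (∀ᵐ ω ∂P, |g ω| ≤ C) → tr g =ᵐ[P] g := by
    intro g hg
    filter_upwards [hg] with ω hω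
    have h1 := (abs_le.1 hω).1
    have h2 := (abs_le.1 hω).2
    show max (-C) (min C (g ω)) = g ω
    rw [min_eq_right h2, max_eq_right h1]
  set η' : ℕ → Ω → ℝ := fun k => tr (η (ns k)) with hη'
  have hη'm : ∀ k, Measurable (η' k) := fun k => htrm _ (hηB (ns k)).1
  have hη'b : ∀ (k : ℕ) (ω : Ω), |η' k ω| ≤ C := fun k ω => htrb _ ω
  have hη'ae : ∀ k, η' k =ᵐ[P] η (ns k) := fun k => htrae _ (hηb (ns k))
  -- Chebyshev bound on bad sets
  set A : ℕ → Set Ω := fun k => {ω | ((1:ℝ)/2) ^ (k+1) ≤ |η' (k+1) ω - η' k ω|} with hA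
  have hAbd : ∀ k, P (A k) ≤ ENNReal.ofReal ((1/2 : ℝ) ^ (k+1)) := by
    intro k
    set t : ℝ := (1/2 : ℝ) ^ (k+1) with hts
    have ht : 0 < t := by positivity
    have hΔm : Measurable (fun ω => (η' (k+1) ω - η' k ω) ^ 2) :=
      ((hη'm (k+1)).sub (hη'm k)).pow_const 2
    have hΔint : Integrable (fun ω => (η' (k+1) ω - η' k ω) ^ 2) P := by
      refine integrable_of_inB hΔm (K := (2*C) ^ 2) fun ω => ?_
      rw [abs_pow, ← sq_abs, abs_abs]
      refine pow_le_pow_left₀ (abs_nonneg _) ?_ 2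
      calc |η' (k+1) ω - η' k ω| ≤ |η' (k+1) ω| + |η' k ω| := abs_sub (η' (k+1) ω) (η' k ω)
        _ ≤ C + C := add_le_add (hη'b (k+1) ω) (hη'b k ω)
        _ = 2 * C := by ring
    have hsub : A k ⊆ {ω | t ^ 2 ≤ (fun ω => (η' (k+1) ω - η' k ω) ^ 2) ω} := by
      intro ω hω
      have h1 : t ≤ |η' (k+1) ω - η' k ω| := hω
      show t ^ 2 ≤ (η' (k+1) ω - η' k ω) ^ 2
      rw [← sq_abs (η' (k+1) ω - η' k ω)]
      exact pow_le_pow_left₀ ht.le h1 2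
    have hval : (∫ ω, (η' (k+1) ω - η' k ω) ^ 2 ∂P) ≤ (1/8 : ℝ) ^ (k+1) := by
      refine le_trans (le_of_eq ?_) (hNdelta k)
      apply integral_congr_ae
      filter_upwards [hη'ae (k+1), hη'ae k] with ω h1 h2
      simp only [Pi.sub_apply, h1, h2]
    have hcheb := mul_meas_ge_le_integral_of_nonneg
      (ae_of_all _ fun ω => sq_nonneg (η' (k+1) ω - η' k ω)) hΔint (t ^ 2)
    have hfin : P (A k) ≠ ⊤ := measure_ne_top _ _
    have hmono' : (P (A k)).toReal ≤ (P {ω | t ^ 2 ≤ (fun ω => (η' (k+1) ω - η' k ω) ^ 2) ω}).toReal :=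
      ENNReal.toReal_mono (measure_ne_top _ _) (measure_mono hsub)
    have h2 : t ^ 2 * (P (A k)).toReal ≤ (1/8 : ℝ) ^ (k+1) := by
      refine le_trans ?_ (le_trans hcheb hval)
      exact mul_le_mul_of_nonneg_left hmono' (by positivity)
    have h3 : (P (A k)).toReal ≤ (1/2 : ℝ) ^ (k+1) := by
      have ht2 : (0:ℝ) < t ^ 2 := by positivity
      have h4 : (P (A k)).toReal ≤ (1/8 : ℝ) ^ (k+1) / t ^ 2 := by
        rw [le_div_iff₀ ht2]
        linarith [h2]
      refine le_trans h4 (le_of_eq ?_)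
      rw [hts, ← pow_mul, div_eq_iff (by positivity : ((1:ℝ)/2) ^ ((k+1)*2) ≠ 0),
        ← pow_add, show (k+1) + (k+1)*2 = (k+1)*3 by ring, pow_mul']
      norm_num
    calc P (A k) = ENNReal.ofReal ((P (A k)).toReal) := (ENNReal.ofReal_toReal hfin).symm
      _ ≤ ENNReal.ofReal ((1/2 : ℝ) ^ (k+1)) := ENNReal.ofReal_le_ofReal h3
  have hsumA : (∑' k, P (A k)) ≠ ⊤ := by
    have h1 : (∑' k, P (A k)) ≤ ∑' k : ℕ, ENNReal.ofReal ((1/2 : ℝ) ^ (k+1)) :=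
      ENNReal.tsum_le_tsum hAbd
    have h2 : ∀ k : ℕ, ENNReal.ofReal ((1/2 : ℝ) ^ (k+1)) ≤ (2⁻¹ : ENNReal) ^ k := by
      intro k
      rw [ENNReal.ofReal_pow (by norm_num)]
      have he : ENNReal.ofReal ((1:ℝ)/2) = (2⁻¹ : ENNReal) := by
        rw [show (1:ℝ)/2 = (2:ℝ)⁻¹ by norm_num]
        rw [ENNReal.ofReal_inv_of_pos (by norm_num)]
        norm_num
      rw [he, pow_succ]
      calc (2⁻¹ : ENNReal) ^ k * 2⁻¹ ≤ (2⁻¹ : ENNReal) ^ k * 1 := by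
            exact mul_le_mul_right (by norm_num) _
        _ = (2⁻¹ : ENNReal) ^ k := mul_one _
    have h3 : (∑' k : ℕ, ENNReal.ofReal ((1/2 : ℝ) ^ (k+1))) ≤ ∑' k : ℕ, (2⁻¹ : ENNReal) ^ k :=
      ENNReal.tsum_le_tsum h2
    have h4 : (∑' k : ℕ, (2⁻¹ : ENNReal) ^ k) = (1 - 2⁻¹)⁻¹ := ENNReal.tsum_geometric _
    have h5 : ((1:ENNReal) - 2⁻¹)⁻¹ ≠ ⊤ := by
      refine ENNReal.inv_ne_top.2 ?_
      intro hzero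
      rw [tsub_eq_zero_iff_le] at hzero
      exact absurd hzero (not_le.2 (ENNReal.inv_lt_one.2 (by norm_num)))
    exact ne_top_of_le_ne_top (by rw [← h4] at h5; exact h5) (le_trans h1 h3)
  have hBC : ∀ᵐ ω ∂P, ∀ᶠ k in atTop, ω ∉ A k := ae_eventually_notMem hsumA
  -- a.e. convergence of the truncated subsequence
  have hconvae : ∀ᵐ ω ∂P, ∃ l : ℝ, Tendsto (fun k => η' k ω) atTop (nhds l) := by
    filter_upwards [hBC] with ω hω
    obtain ⟨K, hK⟩ := eventually_atTop.1 hω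
    set d : ℕ → ℝ := fun k => η' (k+1) ω - η' k ω with hd
    have hsummd : Summable d := by
      rw [← summable_nat_add_iff K]
      refine Summable.of_norm_bounded (g := fun k => (1/2 : ℝ) ^ (K + k)) ?_ ?_
      · have hgeo : Summable (fun k : ℕ => (1/2 : ℝ) ^ k) :=
          summable_geometric_of_lt_one (by norm_num) (by norm_num)
        have := hgeo.mul_left ((1/2 : ℝ) ^ K)
        refine this.congr fun k => ?_
        rw [← pow_add]
      · intro k
        have hk1 : K ≤ k + K := Nat.le_add_left _ _
        have h1 : ω ∉ A (k + K) := hK _ hk1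
        have h2 : |η' (k + K + 1) ω - η' (k + K) ω| < (1/2 : ℝ) ^ (k + K + 1) := by
          by_contra hcon
          push_neg at hcon
          exact h1 hcon
        rw [Real.norm_eq_abs]
        show |η' (k + K + 1) ω - η' (k + K) ω| ≤ ((1:ℝ)/2) ^ (K + k)
        refine le_trans h2.le ?_
        refine pow_le_pow_of_le_one (by norm_num) (by norm_num) (by omega)
    obtain ⟨L, hL⟩ := hsummd
    refine ⟨η' 0 ω + L, ?_⟩
    have hps := hL.tendsto_sum_nat
    have hrepr : ∀ n, η' n ω = η' 0 ω + ∑ k ∈ Finset.range n, d k := by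
      intro n
      rw [Finset.sum_range_sub (f := fun k => η' k ω)]
      ring
    have := tendsto_const_nhds.add hps (f := fun _n : ℕ => η' 0 ω) (x := atTop)
    refine Tendsto.congr (fun n => (hrepr n).symm) this
  obtain ⟨ξ0, hξ0m, hξ0t⟩ := measurable_limit_of_tendsto_metrizable_ae
    (fun k => (hη'm k).aemeasurable) hconvae
  have hξ0b : ∀ᵐ ω ∂P, |ξ0 ω| ≤ C := by
    filter_upwards [hξ0t] with ω hω
    exact le_of_tendsto hω.abs (Eventually.of_forall fun k => hη'b k ω)
  set ξs : Ω → ℝ := tr ξ0 with hξs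
  have hξsB : InB ξs := ⟨htrm _ hξ0m, C, htrb _⟩
  have hξsb : ∀ ω, |ξs ω| ≤ C := htrb _
  have hξsae : ξs =ᵐ[P] ξ0 := htrae _ hξ0b
  have hξst : ∀ᵐ ω ∂P, Tendsto (fun k => η' k ω) atTop (nhds (ξs ω)) := by
    filter_upwards [hξ0t, hξsae] with ω h1 h2
    rw [h2]
    exact h1
  have hξnt : ∀ᵐ ω ∂P, Tendsto (fun k => η (ns k) ω) atTop (nhds (ξs ω)) := by
    filter_upwards [ae_all_iff.2 hη'ae, hξst] with ω hall ht
    exact (Filter.tendsto_congr fun k => hall k).1 ht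

  -- the candidate function and its basic properties
  set Ψ : Ω → ℝ := X - ξs with hΨ
  have hΨB : InB Ψ := hBsub X ξs hX hξsB
  set K0 : ℝ := CX + C with hK0
  set u : ℕ → Ω → ℝ := fun k => X - η' k with hu
  have humeas : ∀ k, Measurable (u k) := fun k => hXm.sub (hη'm k)
  have hub : ∀ (k : ℕ) (ω : Ω), |u k ω| ≤ K0 := by
    intro k ω
    simp only [hu, Pi.sub_apply]
    calc |X ω - η' k ω| ≤ |X ω| + |η' k ω| := abs_sub (X ω) (η' k ω)
      _ ≤ CX + C := add_le_add (hXb ω) (hη'b k ω)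
  have huB : ∀ k, InB (u k) := fun k => ⟨humeas k, K0, hub k⟩
  have hΨb : ∀ ω, |Ψ ω| ≤ K0 := by
    intro ω
    simp only [hΨ, Pi.sub_apply]
    calc |X ω - ξs ω| ≤ |X ω| + |ξs ω| := abs_sub (X ω) (ξs ω)
      _ ≤ CX + C := add_le_add (hXb ω) (hξsb ω)
  have hut : ∀ᵐ ω ∂P, Tendsto (fun k => u k ω) atTop (nhds (Ψ ω)) := by
    filter_upwards [hξst] with ω hω
    simpa only [hu, hΨ, Pi.sub_apply] using tendsto_const_nhds.sub hω
  -- risks along the subsequence tend to the infimum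
  have hρη' : ∀ k, ρ (u k) = ρ (X - η (ns k)) := by
    intro k
    refine hae _ _ (huB k) (hBsub X _ hX (hηB (ns k))) ?_
    filter_upwards [hη'ae k] with ω hω
    simp only [hu, Pi.sub_apply, hω]
  have hρlow : ∀ k, m ≤ ρ (u k) := by
    intro k
    rw [hρη' k]
    exact hmle _ (hηV (ns k))
  have hρhigh : ∀ k, ρ (u k) ≤ m + 1 / (k + 1) := by
    intro k
    rw [hρη' k]
    refine le_trans (hηρ (ns k)) ?_
    have h1 : (1:ℝ) / (ns k + 1) ≤ 1 / (k + 1) := by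
      refine one_div_le_one_div_of_le (by positivity) ?_
      have := hnsk k
      have : (k : ℝ) ≤ (ns k : ℝ) := Nat.cast_le.2 this
      linarith
    linarith
  have hρtendsto : Tendsto (fun k => ρ (u k)) atTop (nhds m) := by
    have h2 : Tendsto (fun k : ℕ => m + 1 / (k + 1)) atTop (nhds m) := by
      have := tendsto_one_div_add_atTop_nhds_zero_nat (𝕜 := ℝ)
      simpa using tendsto_const_nhds.add this
    exact tendsto_of_tendsto_of_tendsto_of_le_of_le tendsto_const_nhds h2 hρlow hρhigh
  -- lower envelopes : continuity from below gives m ≤ ρ Ψ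
  set Φ : ℕ → Ω → ℝ := fun j ω => ⨅ k, u (j + k) ω with hΦ
  have hΦbddB : ∀ j ω, BddBelow (Set.range fun k => u (j + k) ω) := by
    intro j ω
    exact ⟨-K0, by rintro x ⟨k, rfl⟩; exact (abs_le.1 (hub _ ω)).1⟩
  have hΦm : ∀ j, Measurable (Φ j) := fun j => Measurable.iInf fun k => humeas (j + k)
  have hΦb : ∀ (j : ℕ) (ω : Ω), |Φ j ω| ≤ K0 := by
    intro j ω
    rw [abs_le]
    constructor
    · exact le_ciInf fun k => (abs_le.1 (hub _ ω)).1
    · exact le_trans (ciInf_le (hΦbddB j ω) 0) (abs_le.1 (hub (j + 0) ω)).2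
  have hΦB : ∀ j, InB (Φ j) := fun j => ⟨hΦm j, K0, hΦb j⟩
  have hΦmono : ∀ (ω : Ω) (j : ℕ), Φ j ω ≤ Φ (j + 1) ω := by
    intro ω j
    refine le_ciInf fun k => ?_
    rw [show j + 1 + k = j + (k + 1) from by omega]
    exact ciInf_le (hΦbddB j ω) (k + 1)
  have hΦle : ∀ (j : ℕ) (ω : Ω), Φ j ω ≤ u j ω := by
    intro j ω
    refine le_trans (ciInf_le (hΦbddB j ω) 0) (le_of_eq ?_)
    rw [Nat.add_zero]
  have hΦt : ∀ᵐ ω ∂P, Tendsto (fun j => Φ j ω) atTop (nhds (Ψ ω)) := by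
    filter_upwards [hut] with ω hω
    exact tendsto_ciInf_tail (u := fun k => u k ω) (K := K0) (fun k => hub k ω) hω
  have hρΦ : Tendsto (fun j => ρ (Φ j)) atTop (nhds (ρ Ψ)) :=
    hcb Φ Ψ hΦB hΨB ⟨K0, fun j => ae_of_all _ (hΦb j)⟩
      (ae_of_all _ fun ω j => hΦmono ω j) hΦt
  have hge : m ≤ ρ Ψ := by
    refine le_of_tendsto_of_tendsto' hρtendsto hρΦ fun j => ?_
    exact hmono (Φ j) (u j) (hΦB j) (huB j) (ae_of_all _ (hΦle j))
  -- upper envelopes and the λ = 1/2 trick give ρ Ψ ≤ m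
  set Θ : ℕ → Ω → ℝ := fun j ω => ⨆ k, u (j + k) ω with hΘ
  have hΘbddA : ∀ j ω, BddAbove (Set.range fun k => u (j + k) ω) := by
    intro j ω
    exact ⟨K0, by rintro x ⟨k, rfl⟩; exact (abs_le.1 (hub _ ω)).2⟩
  have hΘm : ∀ j, Measurable (Θ j) := fun j => Measurable.iSup fun k => humeas (j + k)
  have hΘb : ∀ (j : ℕ) (ω : Ω), |Θ j ω| ≤ K0 := by
    intro j ω
    rw [abs_le]
    constructor
    · exact le_trans (abs_le.1 (hub (j + 0) ω)).1 (le_ciSup (hΘbddA j ω) 0)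
    · exact ciSup_le fun k => (abs_le.1 (hub _ ω)).2
  have hΘB : ∀ j, InB (Θ j) := fun j => ⟨hΘm j, K0, hΘb j⟩
  have hΘanti : ∀ (ω : Ω) (j : ℕ), Θ (j + 1) ω ≤ Θ j ω := by
    intro ω j
    refine ciSup_le fun k => ?_
    rw [show j + 1 + k = j + (k + 1) from by omega]
    exact le_ciSup (hΘbddA j ω) (k + 1)
  have hΘge : ∀ (j : ℕ) (ω : Ω), u j ω ≤ Θ j ω := by
    intro j ω
    refine le_trans (le_of_eq ?_) (le_ciSup (hΘbddA j ω) 0)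
    rw [Nat.add_zero]
  have hΘt : ∀ᵐ ω ∂P, Tendsto (fun j => Θ j ω) atTop (nhds (Ψ ω)) := by
    filter_upwards [hut] with ω hω
    exact tendsto_ciSup_tail (u := fun k => u k ω) (K := K0) (fun k => hub k ω) hω
  set θf : ℕ → Ω → ℝ := fun j ω => 2 * Ψ ω - Θ j ω with hθf
  have hθm : ∀ j, Measurable (θf j) := fun j => (hΨB.1.const_mul 2).sub (hΘm j)
  have hθb : ∀ (j : ℕ) (ω : Ω), |θf j ω| ≤ 3 * K0 := by
    intro j ω
    simp only [hθf]
    calc |2 * Ψ ω - Θ j ω| ≤ |2 * Ψ ω| + |Θ j ω| := abs_sub _ _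
      _ = 2 * |Ψ ω| + |Θ j ω| := by rw [abs_mul]; norm_num
      _ ≤ 2 * K0 + K0 := add_le_add (by linarith [hΨb ω]) (hΘb j ω)
      _ = 3 * K0 := by ring
  have hθB : ∀ j, InB (θf j) := fun j => ⟨hθm j, 3 * K0, hθb j⟩
  have hθmono : ∀ (ω : Ω) (j : ℕ), θf j ω ≤ θf (j + 1) ω := by
    intro ω j
    simp only [hθf]
    linarith [hΘanti ω j]
  have hθt : ∀ᵐ ω ∂P, Tendsto (fun j => θf j ω) atTop (nhds (Ψ ω)) := by
    filter_upwards [hΘt] with ω hω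
    have h1 : Tendsto (fun j => 2 * Ψ ω - Θ j ω) atTop (nhds (2 * Ψ ω - Ψ ω)) :=
      tendsto_const_nhds.sub hω
    have h2 : 2 * Ψ ω - Ψ ω = Ψ ω := by ring
    rw [h2] at h1
    exact h1
  have hρθ : Tendsto (fun j => ρ (θf j)) atTop (nhds (ρ Ψ)) :=
    hcb θf Ψ hθB hΨB ⟨3 * K0, fun j => ae_of_all _ (hθb j)⟩
      (ae_of_all _ fun ω j => hθmono ω j) hθt
  have hconvest : ∀ j, ρ Ψ ≤ 2⁻¹ * ρ (u j) + (1 - 2⁻¹) * ρ (θf j) := by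
    intro j
    have hid : Ψ = (2⁻¹ : ℝ) • Θ j + (1 - 2⁻¹ : ℝ) • θf j := by
      funext ω
      simp only [Pi.add_apply, Pi.smul_apply, smul_eq_mul, hθf]
      ring
    have h1 : ρ Ψ ≤ 2⁻¹ * ρ (Θ j) + (1 - 2⁻¹) * ρ (θf j) := by
      rw [hid]
      exact hconv (Θ j) (θf j) (hΘB j) (hθB j) 2⁻¹ (by norm_num) (by norm_num)
    have h2 : ρ (Θ j) ≤ ρ (u j) :=
      hmono (u j) (Θ j) (huB j) (hΘB j) (ae_of_all _ (hΘge j))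
    nlinarith [h2]
  have hle : ρ Ψ ≤ m := by
    have hw : Tendsto (fun j => 2⁻¹ * ρ (u j) + (1 - 2⁻¹) * ρ (θf j)) atTop
        (nhds (2⁻¹ * m + (1 - 2⁻¹) * ρ Ψ)) :=
      ((hρtendsto.const_mul 2⁻¹).add (hρθ.const_mul (1 - 2⁻¹)))
    have h3 : ρ Ψ ≤ 2⁻¹ * m + (1 - 2⁻¹) * ρ Ψ :=
      le_of_tendsto_of_tendsto' tendsto_const_nhds hw hconvest
    linarith
  exact ⟨ξs, hξsB, ae_of_all _ hξsb, ⟨fun k => η (ns k), fun k => hηV (ns k), hξnt⟩,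
    le_antisymm hle hge⟩
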